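/- Let q be a prime power and let F, G ∈ F_q[x,y,z] be two homogeneous polynomials of the same degree with no common zero v ≠ 0 in F_q³. Suppose that for some [s₀:t₀] ∈ ℙ¹(F_q) the set C_{[s₀:t₀]}(F_q) contains all q+1 points of some F_q-line L. Then for every [s:t] ∈ ℙ¹(F_q) with [s:t] ≠ [s₀:t₀], the set C_{[s:t]}(F_q) is disjoint from L and hence is not a blocking set; in particular, at least q of the q+1 F_q-members of the pencil are nonblocking. -/

import Mathlib

open MvPolynomial

/-- The `F_q`-line in `ℙ²(F_q)` with (dual) coefficient vector `a`. -/
def projLine (F : Type*) [Field F] (a : Fin 3 → F) :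
    Set (Projectivization F (Fin 3 → F)) :=
  {P | ∑ i, a i * P.rep i = 0}

/-- A set of points of `ℙ²(F_q)` is a blocking set if it meets every `F_q`-line. -/
def IsBlockingSet (F : Type*) [Field F] (B : Set (Projectivization F (Fin 3 → F))) : Prop :=
  ∀ a : Fin 3 → F, a ≠ 0 → (B ∩ projLine F a).Nonempty

/-- The set of `F_q`-points of the member of the pencil `⟨P₁, P₂⟩` at `[s:t] ∈ ℙ¹(F_q)`. -/
def pencilMember (F : Type*) [Field F] (P₁ P₂ : MvPolynomial (Fin 3) F)
    (st : Projectivization F (Fin 2 → F)) :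
    Set (Projectivization F (Fin 3 → F)) :=
  {P | st.rep 0 * eval P.rep P₁ + st.rep 1 * eval P.rep P₂ = 0}

/-- Two points of `ℙ¹` whose representatives have vanishing "determinant" are equal. -/
lemma aux_proj_eq (F : Type*) [Field F] (st st' : Projectivization F (Fin 2 → F))
    (h : st.rep 0 * st'.rep 1 = st.rep 1 * st'.rep 0) : st = st' := by
  have h1 := st.rep_nonzero
  have h2 := st'.rep_nonzero
  have hne : st'.rep 0 ≠ 0 ∨ st'.rep 1 ≠ 0 := by
    by_contra hc
    push_neg at hc
    apply h2
    funext i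
    fin_cases i
    · exact hc.1
    · exact hc.2
  conv_lhs => rw [← st.mk_rep]
  conv_rhs => rw [← st'.mk_rep]
  rw [Projectivization.mk_eq_mk_iff']
  rcases hne with h0 | h0
  · refine ⟨st.rep 0 / st'.rep 0, ?_⟩
    funext i
    fin_cases i
    · simp only [Pi.smul_apply, smul_eq_mul, Fin.zero_eta, Fin.mk_one]
      field_simp
    · simp only [Pi.smul_apply, smul_eq_mul, Fin.zero_eta, Fin.mk_one]
      field_simp
      linear_combination h
  · refine ⟨st.rep 1 / st'.rep 1, ?_⟩
    funext i
    fin_cases i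
    · simp only [Pi.smul_apply, smul_eq_mul, Fin.zero_eta, Fin.mk_one]
      field_simp
      linear_combination -h
    · simp only [Pi.smul_apply, smul_eq_mul, Fin.zero_eta, Fin.mk_one]
      field_simp

/-- **Trivially blocking member forces the rest to be nonblocking.** If one member of the
pencil contains all `q+1` points of a line `L`, every other member is disjoint from `L`, hence
nonblocking; in particular at least `q` of the `q+1` members are nonblocking. -/
theorem stmt_15 (F : Type*) [Field F] [Fintype F] (d : ℕ)
    (P₁ P₂ : MvPolynomial (Fin 3) F)
    (h₁ : P₁.IsHomogeneous d) (h₂ : P₂.IsHomogeneous d)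
    (hbase : ∀ v : Fin 3 → F, v ≠ 0 → ¬(eval v P₁ = 0 ∧ eval v P₂ = 0))
    (st₀ : Projectivization F (Fin 2 → F)) (a : Fin 3 → F) (ha : a ≠ 0)
    (hL : projLine F a ⊆ pencilMember F P₁ P₂ st₀) :
    (∀ st : Projectivization F (Fin 2 → F), st ≠ st₀ →
      Disjoint (pencilMember F P₁ P₂ st) (projLine F a) ∧
      ¬ IsBlockingSet F (pencilMember F P₁ P₂ st)) ∧
    Fintype.card F ≤
      {st : Projectivization F (Fin 2 → F) |
        ¬ IsBlockingSet F (pencilMember F P₁ P₂ st)}.ncard := by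
  have main : ∀ st : Projectivization F (Fin 2 → F), st ≠ st₀ →
      Disjoint (pencilMember F P₁ P₂ st) (projLine F a) ∧
      ¬ IsBlockingSet F (pencilMember F P₁ P₂ st) := by
    intro st hst
    have hdisj : Disjoint (pencilMember F P₁ P₂ st) (projLine F a) := by
      rw [Set.disjoint_left]
      intro P hP hPL
      have hP0 : P ∈ pencilMember F P₁ P₂ st₀ := hL hPL
      have e1 : st.rep 0 * eval P.rep P₁ + st.rep 1 * eval P.rep P₂ = 0 := hP
      have e2 : st₀.rep 0 * eval P.rep P₁ + st₀.rep 1 * eval P.rep P₂ = 0 := hP0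
      have hdet : st.rep 0 * st₀.rep 1 - st.rep 1 * st₀.rep 0 ≠ 0 := by
        intro h
        exact hst (aux_proj_eq F st st₀ (by linear_combination h))
      have hF : eval P.rep P₁ = 0 := by
        have key : (st.rep 0 * st₀.rep 1 - st.rep 1 * st₀.rep 0) * eval P.rep P₁ = 0 := by
          linear_combination st₀.rep 1 * e1 - st.rep 1 * e2
        rcases mul_eq_zero.mp key with h | h
        · exact absurd h hdet
        · exact h
      have hG : eval P.rep P₂ = 0 := by
        have key : (st.rep 0 * st₀.rep 1 - st.rep 1 * st₀.rep 0) * eval P.rep P₂ = 0 := by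
          linear_combination st.rep 0 * e2 - st₀.rep 0 * e1
        rcases mul_eq_zero.mp key with h | h
        · exact absurd h hdet
        · exact h
      exact hbase P.rep P.rep_nonzero ⟨hF, hG⟩
    refine ⟨hdisj, ?_⟩
    intro hB
    obtain ⟨P, hP1, hP2⟩ := hB a ha
    exact (Set.disjoint_left.mp hdisj hP1) hP2
  refine ⟨main, ?_⟩
  -- build an injection from `F` into `ℙ¹ \ {st₀}`
  set v₀ : Fin 2 → F := st₀.rep with hv₀
  have hv₀ne : v₀ ≠ 0 := st₀.rep_nonzero
  obtain ⟨w, hindep⟩ : ∃ w : Fin 2 → F, ∀ e : F, w ≠ e • v₀ := by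
    by_cases h0 : v₀ 0 = 0
    · refine ⟨![1, 0], fun e he => ?_⟩
      have h1 := congrFun he 0
      simp [h0] at h1
    · refine ⟨![0, 1], fun e he => ?_⟩
      have h1 := congrFun he 0
      have h2 := congrFun he 1
      simp only [Matrix.cons_val_zero, Matrix.cons_val_one, Matrix.head_cons,
        Pi.smul_apply, smul_eq_mul] at h1 h2
      rcases mul_eq_zero.mp h1.symm with h | h
      · rw [h, zero_mul] at h2
        exact one_ne_zero h2
      · exact h0 h
  have hvecne : ∀ c : F, w + c • v₀ ≠ 0 := by
    intro c hc
    apply hindep (-c)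
    funext i
    have := congrFun hc i
    simp only [Pi.add_apply, Pi.smul_apply, smul_eq_mul, Pi.zero_apply] at this
    simp only [Pi.smul_apply, smul_eq_mul]
    linear_combination this
  set f : F → Projectivization F (Fin 2 → F) :=
    fun c => Projectivization.mk F (w + c • v₀) (hvecne c) with hf
  have hfne : ∀ c : F, f c ≠ st₀ := by
    intro c hc
    rw [hf] at hc
    simp only at hc
    rw [← st₀.mk_rep, Projectivization.mk_eq_mk_iff'] at hc
    obtain ⟨e, he⟩ := hc
    apply hindep (e - c)
    funext i
    have := congrFun he i
    simp only [Pi.smul_apply, smul_eq_mul, Pi.add_apply] at this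
    rw [← hv₀] at this
    simp only [Pi.smul_apply, smul_eq_mul]
    linear_combination -this
  have hfinj : Function.Injective f := by
    intro c c' hcc
    rw [hf] at hcc
    simp only at hcc
    rw [Projectivization.mk_eq_mk_iff'] at hcc
    obtain ⟨e, he⟩ := hcc
    have hei : ∀ i, e * (w i + c' * v₀ i) = w i + c * v₀ i := by
      intro i
      have := congrFun he i
      simpa using this
    by_cases h1 : e = 1
    · subst h1
      have : ∀ i, (c' - c) * v₀ i = 0 := by
        intro i
        linear_combination hei i
      have hcv : (c' - c) • v₀ = 0 := by
        funext i
        simpa using this i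
      rcases smul_eq_zero.mp hcv with h | h
      · exact (sub_eq_zero.mp h).symm
      · exact absurd h hv₀ne
    · exfalso
      apply hindep ((c - e * c') / (e - 1))
      funext i
      have hi := hei i
      have he1 : e - 1 ≠ 0 := sub_ne_zero.mpr h1
      simp only [Pi.smul_apply, smul_eq_mul]
      field_simp
      linear_combination hi
  calc Fintype.card F = (Set.range f).ncard := by
        rw [← Set.image_univ, Set.ncard_image_of_injective _ hfinj, Set.ncard_univ,
          Nat.card_eq_fintype_card]
      _ ≤ _ := by
        apply Set.ncard_le_ncard
        · rintro x ⟨c, rfl⟩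
          exact (main (f c) (hfne c)).2
        · haveI : Finite (Projectivization F (Fin 2 → F)) := Quotient.finite _
          exact Set.toFinite _
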